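/- Let (ε_n) be a sequence of positive reals with ε_n → 0, and for each n let μ_n be a Gibbs critical point of E_{ε_n,A}, i.e., μ_n = ρ_n ω with ρ_n(x) = exp(W_{μ_n}(x)/ε_n) / ∫_S exp(W_{μ_n}(z)/ε_n) dω(z) for all x ∈ S. If μ_n converges weakly (narrowly) to a probability measure ν, then the support of ν is contained in the set of global maximizers of W_ν on S. -/

import Mathlib

open MeasureTheory Real Filter Topology

noncomputable section

/-- The unit sphere `S = 𝕊^{d-1}` in `ℝ^d`. -/
abbrev Sph (d : ℕ) : Type := Metric.sphere (0 : EuclideanSpace ℝ (Fin d)) 1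

variable {d : ℕ}

/-- The bilinear form `⟨x, A y⟩` for the diagonal matrix `A = diag lam`. -/
def qA (lam : Fin d → ℝ) (x y : EuclideanSpace ℝ (Fin d)) : ℝ :=
  ∑ i, lam i * x i * y i

/-- The interaction kernel `K_A(x,y) = exp ⟨x, A y⟩`. -/
def Kker (lam : Fin d → ℝ) (x y : Sph d) : ℝ :=
  Real.exp (qA lam (x : EuclideanSpace ℝ (Fin d)) (y : EuclideanSpace ℝ (Fin d)))

/-- The interaction energy `I_A(μ)`. -/
def IA (lam : Fin d → ℝ) (μ : Measure (Sph d)) : ℝ :=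
  ∫ x, ∫ y, Kker lam x y ∂μ ∂μ

/-- The potential `W_μ(x) = ∫ K_A(x,y) dμ(y)`. -/
def WA (lam : Fin d → ℝ) (μ : Measure (Sph d)) (x : Sph d) : ℝ :=
  ∫ y, Kker lam x y ∂μ

open scoped Classical in
/-- Relative entropy of `μ` with respect to `ω`, with value `+∞` when `μ` is not
absolutely continuous w.r.t. `ω` or the entropy integral diverges. -/
def Ent (ω μ : Measure (Sph d)) : EReal :=
  if μ ≪ ω ∧ Integrable (fun x => Real.log (μ.rnDeriv ω x).toReal) μ
  then ((∫ x, Real.log (μ.rnDeriv ω x).toReal ∂μ : ℝ) : EReal)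
  else ⊤

/-- The free energy `E_{ε,A}(μ) = ε·Ent(μ) − (1/2)·I_A(μ)`. -/
def EA (lam : Fin d → ℝ) (ω : Measure (Sph d)) (ε : ℝ) (μ : Measure (Sph d)) : EReal :=
  (ε : EReal) * Ent ω μ - ((IA lam μ / 2 : ℝ) : EReal)

/-- The antipodal map on the sphere. -/
def antip (x : Sph d) : Sph d :=
  ⟨-(x : EuclideanSpace ℝ (Fin d)), by
    have hx := x.2
    rw [mem_sphere_zero_iff_norm] at hx ⊢
    rwa [norm_neg]⟩

/-- The sphere self-map induced by a linear isometry equivalence of `ℝ^d`. -/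
def sphMap (g : EuclideanSpace ℝ (Fin d) ≃ₗᵢ[ℝ] EuclideanSpace ℝ (Fin d)) (x : Sph d) : Sph d :=
  ⟨g (x : EuclideanSpace ℝ (Fin d)), by
    have hx := x.2
    rw [mem_sphere_zero_iff_norm] at hx ⊢
    rwa [g.norm_map]⟩

/-- `ω` is the uniform probability measure on the sphere, characterised as a
rotation-invariant Borel probability measure. -/
def IsUniform (ω : Measure (Sph d)) : Prop :=
  IsProbabilityMeasure ω ∧
  ∀ g : EuclideanSpace ℝ (Fin d) ≃ₗᵢ[ℝ] EuclideanSpace ℝ (Fin d),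
    Measure.map (sphMap g) ω = ω

/-- The (topological) support of a measure. -/
def msupport (μ : Measure (Sph d)) : Set (Sph d) :=
  {x | ∀ U : Set (Sph d), IsOpen U → x ∈ U → 0 < μ U}

/-- The set of global maximizers of the potential `W_ν`. -/
def argmaxW (lam : Fin d → ℝ) (ν : Measure (Sph d)) : Set (Sph d) :=
  {x | ∀ y, WA lam ν y ≤ WA lam ν x}

/-- `μ` is a Gibbs critical point of `E_{ε,A}`. -/
def IsGibbs (lam : Fin d → ℝ) (ω : Measure (Sph d)) (ε : ℝ) (μ : Measure (Sph d)) : Prop :=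
  IsProbabilityMeasure μ ∧
  μ = ω.withDensity (fun x => ENNReal.ofReal
    (Real.exp (WA lam μ x / ε) / ∫ z, Real.exp (WA lam μ z / ε) ∂ω))

/-- `μ` is a global minimizer of `E_{ε,A}` over Borel probability measures. -/
def IsMinimizer (lam : Fin d → ℝ) (ω : Measure (Sph d)) (ε : ℝ) (μ : Measure (Sph d)) : Prop :=
  IsProbabilityMeasure μ ∧
  ∀ ν : Measure (Sph d), IsProbabilityMeasure ν → EA lam ω ε μ ≤ EA lam ω ε ν

/-- `m_ε`, the infimum of the free energy over probability measures. -/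
def mEps (lam : Fin d → ℝ) (ω : Measure (Sph d)) (ε : ℝ) : EReal :=
  sInf {r : EReal | ∃ μ : Measure (Sph d), IsProbabilityMeasure μ ∧ EA lam ω ε μ = r}

section Helpers

lemma sph_norm (x : Sph d) : ‖(x : EuclideanSpace ℝ (Fin d))‖ = 1 := by
  have hx := x.2
  rwa [mem_sphere_zero_iff_norm] at hx

lemma coord_abs_le_norm (x : EuclideanSpace ℝ (Fin d)) (i : Fin d) : |x i| ≤ ‖x‖ := by
  rw [EuclideanSpace.norm_eq, ← Real.sqrt_sq_eq_abs]
  apply Real.sqrt_le_sqrt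
  have h : (x i) ^ 2 = ‖x i‖ ^ 2 := by rw [Real.norm_eq_abs, sq_abs]
  rw [h]
  exact Finset.single_le_sum (f := fun j => ‖x j‖ ^ 2) (fun j _ => sq_nonneg _)
    (Finset.mem_univ i)

lemma coord_abs_le_one (x : Sph d) (i : Fin d) :
    |(x : EuclideanSpace ℝ (Fin d)) i| ≤ 1 :=
  (coord_abs_le_norm _ i).trans (le_of_eq (sph_norm x))

lemma qA_abs_le (lam : Fin d → ℝ) (x y : Sph d) :
    |qA lam (x : EuclideanSpace ℝ (Fin d)) (y : EuclideanSpace ℝ (Fin d))| ≤ ∑ i, |lam i| := by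
  refine (Finset.abs_sum_le_sum_abs _ _).trans ?_
  apply Finset.sum_le_sum
  intro i _
  rw [abs_mul, abs_mul]
  calc |lam i| * |(x : EuclideanSpace ℝ (Fin d)) i| * |(y : EuclideanSpace ℝ (Fin d)) i|
      ≤ |lam i| * 1 * 1 := by
        gcongr
        · exact coord_abs_le_one x i
        · exact coord_abs_le_one y i
    _ = |lam i| := by ring

lemma qA_sub_le (lam : Fin d → ℝ) (x x' y : Sph d) :
    |qA lam (x : EuclideanSpace ℝ (Fin d)) (y : EuclideanSpace ℝ (Fin d)) -
      qA lam (x' : EuclideanSpace ℝ (Fin d)) (y : EuclideanSpace ℝ (Fin d))| ≤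
      (∑ i, |lam i|) * dist x x' := by
  have hdist : ∀ i : Fin d,
      |(x : EuclideanSpace ℝ (Fin d)) i - (x' : EuclideanSpace ℝ (Fin d)) i| ≤ dist x x' := by
    intro i
    have h1 : dist x x' = ‖(x : EuclideanSpace ℝ (Fin d)) - (x' : EuclideanSpace ℝ (Fin d))‖ := by
      rw [Subtype.dist_eq, dist_eq_norm]
    rw [h1]
    have h2 := coord_abs_le_norm
      ((x : EuclideanSpace ℝ (Fin d)) - (x' : EuclideanSpace ℝ (Fin d))) i
    simpa using h2
  unfold qA
  rw [← Finset.sum_sub_distrib]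
  refine (Finset.abs_sum_le_sum_abs _ _).trans ?_
  rw [Finset.sum_mul]
  apply Finset.sum_le_sum
  intro i _
  have h3 : lam i * (x : EuclideanSpace ℝ (Fin d)) i * (y : EuclideanSpace ℝ (Fin d)) i -
      lam i * (x' : EuclideanSpace ℝ (Fin d)) i * (y : EuclideanSpace ℝ (Fin d)) i =
      lam i * (((x : EuclideanSpace ℝ (Fin d)) i - (x' : EuclideanSpace ℝ (Fin d)) i)
        * (y : EuclideanSpace ℝ (Fin d)) i) := by ring
  rw [h3, abs_mul, abs_mul]
  calc |lam i| * (|(x : EuclideanSpace ℝ (Fin d)) i - (x' : EuclideanSpace ℝ (Fin d)) i|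
        * |(y : EuclideanSpace ℝ (Fin d)) i|)
      ≤ |lam i| * (dist x x' * 1) := by
        gcongr
        · exact hdist i
        · exact coord_abs_le_one y i
    _ = |lam i| * dist x x' := by ring

lemma exp_sub_exp_le {a b M : ℝ} (ha : a ≤ M) (hb : b ≤ M) :
    |Real.exp a - Real.exp b| ≤ Real.exp M * |a - b| := by
  wlog hab : b ≤ a generalizing a b
  · rw [abs_sub_comm, abs_sub_comm a b]; exact this hb ha (le_of_not_ge hab)
  rw [abs_of_nonneg (sub_nonneg.2 (Real.exp_le_exp.2 hab)), abs_of_nonneg (sub_nonneg.2 hab)]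
  have hba : a + (b - a) = b := by ring
  have h1 : Real.exp a - Real.exp b = Real.exp a * (1 - Real.exp (b - a)) := by
    rw [mul_sub, mul_one, ← Real.exp_add, hba]
  have h2 : 1 - Real.exp (b - a) ≤ a - b := by
    have := Real.add_one_le_exp (b - a); linarith
  calc Real.exp a - Real.exp b = Real.exp a * (1 - Real.exp (b - a)) := h1
    _ ≤ Real.exp a * (a - b) :=
        mul_le_mul_of_nonneg_left h2 (Real.exp_pos a).le
    _ ≤ Real.exp M * (a - b) :=
        mul_le_mul_of_nonneg_right (Real.exp_le_exp.2 ha) (sub_nonneg.2 hab)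

lemma Kker_sub_le (lam : Fin d → ℝ) (x x' y : Sph d) :
    |Kker lam x y - Kker lam x' y| ≤
      Real.exp (∑ i, |lam i|) * ((∑ i, |lam i|) * dist x x') := by
  have h1 := exp_sub_exp_le (M := ∑ i, |lam i|)
    (abs_le.1 (qA_abs_le lam x y)).2 (abs_le.1 (qA_abs_le lam x' y)).2
  refine h1.trans ?_
  exact mul_le_mul_of_nonneg_left (qA_sub_le lam x x' y) (Real.exp_pos _).le

lemma Kker_cont (lam : Fin d → ℝ) (x : Sph d) :
    Continuous fun y : Sph d => Kker lam x y := by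
  apply Real.continuous_exp.comp
  apply continuous_finset_sum
  intro i _
  exact continuous_const.mul ((EuclideanSpace.proj i).continuous.comp continuous_subtype_val)

lemma Kker_integrable (lam : Fin d → ℝ) (x : Sph d) (μ : Measure (Sph d))
    [IsFiniteMeasure μ] : Integrable (fun y => Kker lam x y) μ :=
  (Kker_cont lam x).integrable_of_hasCompactSupport (HasCompactSupport.of_compactSpace _)

lemma WA_lip (lam : Fin d → ℝ) (μ : Measure (Sph d)) [IsProbabilityMeasure μ] (x x' : Sph d) :
    |WA lam μ x - WA lam μ x'| ≤
      Real.exp (∑ i, |lam i|) * ((∑ i, |lam i|) * dist x x') := by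
  unfold WA
  rw [← integral_sub (Kker_integrable lam x μ) (Kker_integrable lam x' μ)]
  have h := norm_integral_le_of_norm_le_const (μ := μ)
    (f := fun y => Kker lam x y - Kker lam x' y)
    (C := Real.exp (∑ i, |lam i|) * ((∑ i, |lam i|) * dist x x'))
    (Filter.Eventually.of_forall fun y => by
      rw [Real.norm_eq_abs]; exact Kker_sub_le lam x x' y)
  simpa [Real.norm_eq_abs, measure_univ] using h

lemma WA_cont (lam : Fin d → ℝ) (μ : Measure (Sph d)) [IsProbabilityMeasure μ] :
    Continuous (WA lam μ) := by
  have : LipschitzWith (Real.exp (∑ i, |lam i|) * (∑ i, |lam i|)).toNNReal (WA lam μ) := by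
    apply LipschitzWith.of_dist_le_mul
    intro x x'
    rw [Real.dist_eq]
    refine (WA_lip lam μ x x').trans ?_
    rw [← mul_assoc]
    gcongr
    exact Real.le_coe_toNNReal _
  exact this.continuous

lemma sphMap_cont (g : EuclideanSpace ℝ (Fin d) ≃ₗᵢ[ℝ] EuclideanSpace ℝ (Fin d)) :
    Continuous (sphMap g) :=
  Continuous.subtype_mk (g.continuous.comp continuous_subtype_val) _

lemma uniform_ball_pos (ω : Measure (Sph d)) (hω : IsUniform ω) (y : Sph d) {r : ℝ}
    (hr : 0 < r) : 0 < ω (Metric.ball y r) := by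
  obtain ⟨hprob, hinv⟩ := hω
  by_contra hcon
  push_neg at hcon
  have h0 : ω (Metric.ball y r) = 0 := le_antisymm hcon zero_le
  have hswap : ∀ z : Sph d, ∃ g : EuclideanSpace ℝ (Fin d) ≃ₗᵢ[ℝ] EuclideanSpace ℝ (Fin d),
      sphMap g z = y := by
    intro z
    refine ⟨Submodule.reflection (ℝ ∙ ((z : EuclideanSpace ℝ (Fin d)) - (y : EuclideanSpace ℝ (Fin d))))ᗮ, ?_⟩
    apply Subtype.ext
    exact Submodule.reflection_sub (by rw [sph_norm z, sph_norm y])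
  choose g hg using hswap
  have hUopen : ∀ z : Sph d, IsOpen (sphMap (g z) ⁻¹' Metric.ball y r) :=
    fun z => Metric.isOpen_ball.preimage (sphMap_cont (g z))
  have hmem : ∀ z : Sph d, z ∈ sphMap (g z) ⁻¹' Metric.ball y r := by
    intro z
    simp only [Set.mem_preimage, Metric.mem_ball, hg z, dist_self]
    exact hr
  obtain ⟨t, ht⟩ := isCompact_univ.elim_finite_subcover
    (fun z : Sph d => sphMap (g z) ⁻¹' Metric.ball y r) hUopen
    (fun z _ => Set.mem_iUnion.mpr ⟨z, hmem z⟩)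
  have hz : ∀ z : Sph d, ω (sphMap (g z) ⁻¹' Metric.ball y r) = 0 := by
    intro z
    have := hinv (g z)
    calc ω (sphMap (g z) ⁻¹' Metric.ball y r)
        = Measure.map (sphMap (g z)) ω (Metric.ball y r) := by
          rw [Measure.map_apply (sphMap_cont (g z)).measurable measurableSet_ball]
      _ = ω (Metric.ball y r) := by rw [this]
      _ = 0 := h0
  have hle : ω Set.univ ≤ ∑ z ∈ t, ω (sphMap (g z) ⁻¹' Metric.ball y r) :=
    (measure_mono ht).trans (measure_biUnion_finset_le t _)
  rw [measure_univ] at hle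
  simp [hz] at hle

end Helpers

/-- narrow limits of Gibbs critical points are max-support states. -/
theorem stmt5 (d : ℕ) (hd : 2 ≤ d) (lam : Fin d → ℝ)
    (hanti : Antitone lam)
    (hgap : lam ⟨1, by omega⟩ < lam ⟨0, by omega⟩)
    (hpos : ∀ i, 0 < lam i)
    (ω : Measure (Sph d)) (hω : IsUniform ω)
    (ε : ℕ → ℝ) (hεpos : ∀ n, 0 < ε n) (hε0 : Tendsto ε atTop (𝓝 0))
    (μ : ℕ → Measure (Sph d)) (hμ : ∀ n, IsGibbs lam ω (ε n) (μ n))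
    (ν : Measure (Sph d)) (hν : IsProbabilityMeasure ν)
    (hconv : ∀ f : Sph d → ℝ, Continuous f →
      Tendsto (fun n => ∫ x, f x ∂(μ n)) atTop (𝓝 (∫ x, f x ∂ν))) :
    msupport ν ⊆ argmaxW lam ν := by
  intro x₀ hx₀ y₀
  by_contra hlt
  push_neg at hlt
  haveI hν' : IsProbabilityMeasure ν := hν
  haveI hωP : IsProbabilityMeasure ω := hω.1
  set L : ℝ := ∑ i, |lam i| with hL
  have hL0 : 0 ≤ L := Finset.sum_nonneg fun i _ => abs_nonneg _
  set C : ℝ := Real.exp L * L with hCdef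
  have hC0 : 0 ≤ C := mul_nonneg (Real.exp_pos _).le hL0
  set δ : ℝ := (WA lam ν y₀ - WA lam ν x₀) / 8 with hδdef
  have hδ : 0 < δ := by simp only [hδdef]; linarith
  set r : ℝ := δ / (C + 1) with hrdef
  have hr : 0 < r := div_pos hδ (by linarith)
  have hCr : C * r ≤ δ := by
    have h2 : (C + 1) * r = δ := by
      rw [hrdef, mul_div_cancel₀ _ (by linarith : C + 1 ≠ 0)]
    nlinarith
  -- uniform Lipschitz bound for the potentials
  have hlipn : ∀ n, ∀ x x' : Sph d, |WA lam (μ n) x - WA lam (μ n) x'| ≤ C * dist x x' := by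
    intro n x x'
    haveI := (hμ n).1
    have h := WA_lip lam (μ n) x x'
    rw [hCdef, mul_assoc]
    exact h
  -- convergence of the potentials at the two relevant points
  have hcx : Tendsto (fun n => WA lam (μ n) x₀) atTop (𝓝 (WA lam ν x₀)) := by
    have := hconv (fun y => Kker lam x₀ y) (Kker_cont lam x₀)
    simpa [WA] using this
  have hcy : Tendsto (fun n => WA lam (μ n) y₀) atTop (𝓝 (WA lam ν y₀)) := by
    have := hconv (fun y => Kker lam y₀ y) (Kker_cont lam y₀)
    simpa [WA] using this
  have hevx : ∀ᶠ n in atTop, |WA lam (μ n) x₀ - WA lam ν x₀| < δ := by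
    have := hcx (Metric.ball_mem_nhds _ hδ)
    simpa [Real.dist_eq] using this
  have hevy : ∀ᶠ n in atTop, |WA lam (μ n) y₀ - WA lam ν y₀| < δ := by
    have := hcy (Metric.ball_mem_nhds _ hδ)
    simpa [Real.dist_eq] using this
  set B : Set (Sph d) := Metric.ball x₀ r with hBdef
  set B' : Set (Sph d) := Metric.ball y₀ r with hB'def
  set c : ℝ := (ω B').toReal with hcdef
  have hc : 0 < c :=
    ENNReal.toReal_pos (uniform_ball_pos ω hω y₀ hr).ne' (measure_ne_top ω _)
  -- the bump function
  set f : Sph d → ℝ := fun x => min 1 (max 0 (2 - (2 / r) * dist x x₀)) with hfdef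
  have hfc : Continuous f := by
    apply continuous_const.min
    apply continuous_const.max
    exact continuous_const.sub (continuous_const.mul (continuous_id.dist continuous_const))
  have hf0 : ∀ x, 0 ≤ f x := fun x => le_min zero_le_one (le_max_left _ _)
  have hf1 : ∀ x, f x ≤ 1 := fun x => min_le_left _ _
  have hfzero : ∀ x, x ∉ B → f x = 0 := by
    intro x hx
    have hdx : r ≤ dist x x₀ := not_lt.1 fun h => hx (Metric.mem_ball.2 h)
    have h1 : (2 / r) * r ≤ (2 / r) * dist x x₀ :=
      mul_le_mul_of_nonneg_left hdx (by positivity)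
    rw [div_mul_cancel₀ _ hr.ne'] at h1
    have h2 : 2 - (2 / r) * dist x x₀ ≤ 0 := by linarith
    show min 1 (max 0 (2 - (2 / r) * dist x x₀)) = 0
    rw [max_eq_left h2, min_eq_right zero_le_one]
  have hfone : ∀ x ∈ Metric.ball x₀ (r / 2), f x = 1 := by
    intro x hx
    have hdx : dist x x₀ < r / 2 := Metric.mem_ball.1 hx
    have h1 : (2 / r) * dist x x₀ < (2 / r) * (r / 2) :=
      mul_lt_mul_of_pos_left hdx (by positivity)
    have h2 : (2 / r) * (r / 2) = 1 := by field_simp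
    rw [h2] at h1
    have h3 : (1 : ℝ) ≤ 2 - (2 / r) * dist x x₀ := by linarith
    show min 1 (max 0 (2 - (2 / r) * dist x x₀)) = 1
    rw [max_eq_right (by linarith), min_eq_left h3]
  -- key estimate along the sequence
  have hkey : ∀ᶠ n in atTop, ∫ x, f x ∂(μ n) ≤ Real.exp (-(4 * δ) / ε n) / c := by
    filter_upwards [hevx, hevy] with n hnx hny
    haveI := (hμ n).1
    have hWn_cont : Continuous (WA lam (μ n)) := WA_cont lam (μ n)
    have hint : Integrable (fun z => Real.exp (WA lam (μ n) z / ε n)) ω :=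
      (Real.continuous_exp.comp (hWn_cont.div_const (ε n))).integrable_of_hasCompactSupport
        (HasCompactSupport.of_compactSpace _)
    set Z : ℝ := ∫ z, Real.exp (WA lam (μ n) z / ε n) ∂ω with hZdef
    set s : ℝ := WA lam ν x₀ + 2 * δ with hsdef
    set t : ℝ := WA lam ν y₀ - 2 * δ with htdef
    have hs : ∀ x ∈ B, WA lam (μ n) x ≤ s := by
      intro x hx
      have h1 := abs_le.1 (hlipn n x x₀)
      have h2 : dist x x₀ ≤ r := (Metric.mem_ball.1 hx).le
      have h3 : C * dist x x₀ ≤ δ :=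
        (mul_le_mul_of_nonneg_left h2 hC0).trans hCr
      have h4 := abs_le.1 hnx.le
      simp only [hsdef]
      linarith [h1.2]
    have ht : ∀ z ∈ B', t ≤ WA lam (μ n) z := by
      intro z hz
      have h1 := abs_le.1 (hlipn n z y₀)
      have h2 : dist z y₀ ≤ r := (Metric.mem_ball.1 hz).le
      have h3 : C * dist z y₀ ≤ δ :=
        (mul_le_mul_of_nonneg_left h2 hC0).trans hCr
      have h4 := abs_le.1 hny.le
      simp only [htdef]
      linarith [h1.1]
    have hZ1 : Real.exp (t / ε n) * c ≤ Z := by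
      have e1 : ∫ z in B', (Real.exp (t / ε n)) ∂ω = c * Real.exp (t / ε n) := by
        rw [setIntegral_const, smul_eq_mul, hcdef, measureReal_def]
      have e2 : ∫ z in B', (Real.exp (t / ε n)) ∂ω
          ≤ ∫ z in B', Real.exp (WA lam (μ n) z / ε n) ∂ω := by
        apply setIntegral_mono_on (integrable_const _).integrableOn
          hint.integrableOn measurableSet_ball
        intro z hz
        exact Real.exp_le_exp.2 ((div_le_div_iff_of_pos_right (hεpos n)).2 (ht z hz))
      have e3 : ∫ z in B', Real.exp (WA lam (μ n) z / ε n) ∂ω ≤ Z :=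
        setIntegral_le_integral hint (ae_of_all _ fun z => (Real.exp_pos _).le)
      calc Real.exp (t / ε n) * c = c * Real.exp (t / ε n) := mul_comm _ _
        _ = ∫ z in B', (Real.exp (t / ε n)) ∂ω := e1.symm
        _ ≤ Z := e2.trans e3
    have hZpos : 0 < Z := lt_of_lt_of_le (mul_pos (Real.exp_pos _) hc) hZ1
    have hmB : μ n B ≤ ENNReal.ofReal (Real.exp (s / ε n) / Z) := by
      conv_lhs => rw [(hμ n).2]
      rw [withDensity_apply _ measurableSet_ball, ← hZdef]
      calc ∫⁻ x in B, ENNReal.ofReal (Real.exp (WA lam (μ n) x / ε n) / Z) ∂ω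
          ≤ ∫⁻ x in B, ENNReal.ofReal (Real.exp (s / ε n) / Z) ∂ω := by
            apply setLIntegral_mono' measurableSet_ball
            intro x hx
            apply ENNReal.ofReal_le_ofReal
            exact (div_le_div_iff_of_pos_right hZpos).2
              (Real.exp_le_exp.2 ((div_le_div_iff_of_pos_right (hεpos n)).2 (hs x hx)))
        _ = ENNReal.ofReal (Real.exp (s / ε n) / Z) * ω B := setLIntegral_const _ _
        _ ≤ ENNReal.ofReal (Real.exp (s / ε n) / Z) * 1 := by
            gcongr
            exact prob_le_one
        _ = ENNReal.ofReal (Real.exp (s / ε n) / Z) := mul_one _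
    have htoReal : (μ n B).toReal ≤ Real.exp (s / ε n) / Z :=
      ENNReal.toReal_le_of_le_ofReal (div_nonneg (Real.exp_pos _).le hZpos.le) hmB
    have hfinal : Real.exp (s / ε n) / Z ≤ Real.exp (-(4 * δ) / ε n) / c := by
      have hd1 : Real.exp (s / ε n) / Z ≤ Real.exp (s / ε n) / (Real.exp (t / ε n) * c) :=
        div_le_div_of_nonneg_left (Real.exp_pos _).le (mul_pos (Real.exp_pos _) hc) hZ1
      have hd2 : Real.exp (s / ε n) / (Real.exp (t / ε n) * c)
          = Real.exp ((s - t) / ε n) / c := by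
        rw [div_mul_eq_div_div, ← Real.exp_sub, div_sub_div_same]
      have hst : s - t = -(4 * δ) := by
        have h8 : WA lam ν y₀ - WA lam ν x₀ = 8 * δ := by rw [hδdef]; ring
        simp only [hsdef, htdef]
        linarith
      rw [hd2, hst] at hd1
      exact hd1
    -- compare the integral of f with μ n B
    have hfint : Integrable f (μ n) :=
      hfc.integrable_of_hasCompactSupport (HasCompactSupport.of_compactSpace _)
    have hindint : Integrable (B.indicator (fun _ => (1 : ℝ))) (μ n) :=
      (integrable_const 1).indicator measurableSet_ball
    have hmono : ∫ x, f x ∂(μ n) ≤ ∫ x, B.indicator (fun _ => (1 : ℝ)) x ∂(μ n) := by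
      apply integral_mono hfint hindint
      intro x
      by_cases hx : x ∈ B
      · rw [Set.indicator_of_mem hx]; exact hf1 x
      · rw [Set.indicator_of_notMem hx, hfzero x hx]
    rw [integral_indicator_const _ measurableSet_ball, smul_eq_mul, mul_one, measureReal_def] at hmono
    exact hmono.trans (htoReal.trans hfinal)
  -- the right-hand side tends to 0
  have hinv : Tendsto (fun n => (ε n)⁻¹) atTop atTop := by
    apply tendsto_inv_nhdsGT_zero.comp
    exact tendsto_nhdsWithin_of_tendsto_nhds_of_eventually_within _ hε0
      (Eventually.of_forall fun n => hεpos n)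
  have hbot : Tendsto (fun n => -(4 * δ) / ε n) atTop atBot := by
    simp only [div_eq_mul_inv]
    exact (tendsto_const_mul_atBot_of_neg (by linarith)).2 hinv
  have hexp : Tendsto (fun n => Real.exp (-(4 * δ) / ε n)) atTop (𝓝 0) :=
    Real.tendsto_exp_atBot.comp hbot
  have hrhs : Tendsto (fun n => Real.exp (-(4 * δ) / ε n) / c) atTop (𝓝 0) := by
    simpa using hexp.div_const c
  have hlim : ∫ x, f x ∂ν ≤ 0 :=
    le_of_tendsto_of_tendsto (hconv f hfc) hrhs hkey
  -- lower bound for the integral of f against ν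
  have hνpos : 0 < ν (Metric.ball x₀ (r / 2)) :=
    hx₀ _ Metric.isOpen_ball (Metric.mem_ball_self (by positivity))
  have hνtR : 0 < (ν (Metric.ball x₀ (r / 2))).toReal :=
    ENNReal.toReal_pos hνpos.ne' (measure_ne_top ν _)
  have hfintν : Integrable f ν :=
    hfc.integrable_of_hasCompactSupport (HasCompactSupport.of_compactSpace _)
  have hindintν : Integrable ((Metric.ball x₀ (r / 2)).indicator (fun _ => (1 : ℝ))) ν :=
    (integrable_const 1).indicator measurableSet_ball
  have hlow : ∫ x, (Metric.ball x₀ (r / 2)).indicator (fun _ => (1 : ℝ)) x ∂ν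
      ≤ ∫ x, f x ∂ν := by
    apply integral_mono hindintν hfintν
    intro x
    by_cases hx : x ∈ Metric.ball x₀ (r / 2)
    · rw [Set.indicator_of_mem hx, hfone x hx]
    · rw [Set.indicator_of_notMem hx]; exact hf0 x
  rw [integral_indicator_const _ measurableSet_ball, smul_eq_mul, mul_one, measureReal_def] at hlow
  linarith

end
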